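/- Let q be a prime power, k ≥ 1 an integer, γ a fixed primitive element of F_{q^k}, and e a nonnegative integer. For a ∈ F_{q^k} let w(a) = #{ i : 0 ≤ i < q^k − 1, Tr(a·γ^{e·i}) ≠ 0 }. If the set W = { w(a) : a ∈ F_{q^k}, a ≠ 0 } \ {0} has exactly two elements w₁ and w₂, then w₁ − w₂ ≠ 1 and w₂ − w₁ ≠ 1 (that is, the two nonzero weights of a two-weight irreducible cyclic code of length q^k − 1 over F_q never differ by 1). -/

import Mathlib

lemma aux_dvd_ncard {A : Type*} [AddCommGroup A] [Fintype A] [DecidableEq A]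
    (T : AddSubgroup A) (S : Set A)
    (hS : ∀ t ∈ T, ∀ i ∈ S, i + t ∈ S) : Nat.card T ∣ S.ncard := by
  classical
  have hfin : S.Finite := Set.toFinite S
  set s : Finset A := hfin.toFinset with hs
  have hmem : ∀ x, x ∈ s ↔ x ∈ S := fun x => hfin.mem_toFinset
  set π : A → A ⧸ T := QuotientAddGroup.mk with hπ
  have hfib : ∀ x ∈ s, (s.filter (fun y => π y = π x)).card = Nat.card T := by
    intro x hx
    have himg : (s.filter (fun y => π y = π x))
        = Finset.image (fun t : T => x + (t : A)) Finset.univ := by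
      ext y
      simp only [Finset.mem_filter, Finset.mem_image, Finset.mem_univ, true_and]
      constructor
      · rintro ⟨hyS, hyx⟩
        have ht : y - x ∈ T := by
          have := (QuotientAddGroup.eq (s := T) (a := y) (b := x)).mp hyx
          have h2 : -(-y + x) ∈ T := T.neg_mem this
          simpa [neg_add_rev, sub_eq_add_neg, add_comm] using h2
        exact ⟨⟨y - x, ht⟩, by simp⟩
      · rintro ⟨t, rfl⟩
        constructor
        · exact (hmem _).mpr (hS t t.2 x ((hmem _).mp hx))
        · rw [hπ]
          refine (QuotientAddGroup.eq (s := T)).mpr ?_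
          simpa [neg_add_rev, add_assoc] using T.neg_mem t.2
    rw [himg, Finset.card_image_of_injective _ ?_, Finset.card_univ,
      Nat.card_eq_fintype_card]
    exact Function.Injective.comp (add_right_injective x) Subtype.coe_injective
  have hcard : s.card = ∑ b ∈ s.image π, (s.filter (fun y => π y = b)).card :=
    Finset.card_eq_sum_card_fiberwise (fun x hx => Finset.mem_image_of_mem π hx)
  have : s.card = (s.image π).card * Nat.card T := by
    rw [hcard]
    rw [Finset.sum_congr rfl (fun b hb => ?_), Finset.sum_const, smul_eq_mul]
    obtain ⟨x, hx, rfl⟩ := Finset.mem_image.mp hb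
    exact hfib x hx
  rw [Set.ncard_eq_toFinset_card _ hfin]
  exact Dvd.intro _ (by rw [this, Nat.mul_comm])





/-- The two nonzero weights of a two-weight irreducible cyclic code of length `q^k − 1`
over `F_q` never differ by `1`. -/
theorem two_weight_irreducible_cyclic_weights_ne_succ
    (q k : ℕ) (hk : 1 ≤ k)
    (F E : Type*) [Field F] [Fintype F] [Field E] [Fintype E] [Algebra F E]
    (hq : Fintype.card F = q) (hE : Fintype.card E = q ^ k)
    (γ : Eˣ) (hγ : ∀ x : Eˣ, x ∈ Subgroup.zpowers γ)
    (e : ℕ) (w : E → ℕ)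
    (hw : ∀ a : E, w a =
      {i : ℕ | i < q ^ k - 1 ∧ Algebra.trace F E (a * (γ : E) ^ (e * i)) ≠ 0}.ncard)
    (w₁ w₂ : ℕ) (hne : w₁ ≠ w₂)
    (hW : {m : ℕ | ∃ a : E, a ≠ 0 ∧ w a = m} \ {0} = {w₁, w₂}) :
    w₁ ≠ w₂ + 1 ∧ w₂ ≠ w₁ + 1 := by
  classical
  have hq2 : 2 ≤ q := hq ▸ Fintype.one_lt_card
  set n := q ^ k - 1 with hn
  have hqk : q ≤ q ^ k := Nat.le_self_pow (by omega) q
  have hn1 : 1 ≤ n := by omega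
  haveI : NeZero n := ⟨by omega⟩
  have hncard : Fintype.card Eˣ = n := by rw [Fintype.card_units, hE]
  set u : Eˣ := γ ^ e with hu
  have hun : u ^ n = 1 := by
    rw [hu, ← pow_mul, mul_comm, pow_mul, ← hncard, pow_card_eq_one, one_pow]
  set ψ : ZMod n → Eˣ := fun i => u ^ i.val with hψ
  have hψper : ∀ m : ℕ, u ^ m = ψ (m : ZMod n) := by
    intro m
    show u ^ m = u ^ (ZMod.val (m : ZMod n))
    rw [ZMod.val_natCast]
    conv_lhs => rw [← Nat.div_add_mod m n]
    rw [pow_add, pow_mul, hun, one_pow, one_mul]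
  have hcastval : ∀ i : ZMod n, ((i.val : ℕ) : ZMod n) = i := ZMod.natCast_rightInverse
  have hψadd : ∀ i j : ZMod n, ψ (i + j) = ψ i * ψ j := by
    intro i j
    have h1 : ψ (i + j) = u ^ (i.val + j.val) := by
      rw [hψper (i.val + j.val)]
      congr 1
      push_cast [hcastval]
      ring
    rw [h1, pow_add]
  have hψ0 : ψ 0 = 1 := by show u ^ (0 : ZMod n).val = 1; rw [ZMod.val_zero, pow_zero]
  -- the subgroup T
  set T : AddSubgroup (ZMod n) :=
    { carrier := {t | ∃ c : F, ((ψ t : Eˣ) : E) = algebraMap F E c}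
      zero_mem' := ⟨1, by rw [hψ0, Units.val_one, map_one]⟩
      add_mem' := by
        rintro a b ⟨c, hc⟩ ⟨d, hd⟩
        exact ⟨c * d, by rw [hψadd, Units.val_mul, hc, hd, map_mul]⟩
      neg_mem' := by
        rintro a ⟨c, hc⟩
        have hinv : ψ (-a) = (ψ a)⁻¹ := by
          have : ψ (-a) * ψ a = 1 := by rw [← hψadd, neg_add_cancel, hψ0]
          exact eq_inv_of_mul_eq_one_left this
        exact ⟨c⁻¹, by rw [hinv, Units.val_inv_eq_inv_val, hc, map_inv₀]⟩ } with hT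
  set S : E → Set (ZMod n) := fun a => {i | Algebra.trace F E (a * ψ i) ≠ 0} with hS
  -- w a equals ncard of S a
  have hwS : ∀ a : E, w a = (S a).ncard := by
    intro a
    rw [hw a]
    have himg : S a = (fun i : ℕ => (i : ZMod n)) ''
        {i : ℕ | i < n ∧ Algebra.trace F E (a * (γ : E) ^ (e * i)) ≠ 0} := by
      ext j
      constructor
      · intro hj
        refine ⟨j.val, ⟨j.val_lt, ?_⟩, hcastval j⟩
        have : ((γ : E)) ^ (e * j.val) = ((ψ j : Eˣ) : E) := by
          simp only [hψ, hu]
          push_cast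
          rw [pow_mul]
        rwa [this]
      · rintro ⟨i, ⟨hi, hTr⟩, rfl⟩
        have : ((ψ ((i : ℕ) : ZMod n) : Eˣ) : E) = (γ : E) ^ (e * i) := by
          rw [← hψper i, hu]
          push_cast
          rw [pow_mul]
        show Algebra.trace F E (a * ψ ((i : ℕ) : ZMod n)) ≠ 0
        rwa [this]
    rw [himg, Set.ncard_image_of_injOn]
    intro i hi j hj hij
    have h2 : (i : ZMod n).val = (j : ZMod n).val := congrArg ZMod.val hij
    rwa [ZMod.val_natCast_of_lt hi.1, ZMod.val_natCast_of_lt hj.1] at h2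
  -- invariance and divisibility
  have hdvd : ∀ a : E, Nat.card T ∣ w a := by
    intro a
    rw [hwS a]
    refine aux_dvd_ncard T (S a) ?_
    rintro t ⟨c, hc⟩ i hi
    show Algebra.trace F E (a * ψ (i + t)) ≠ 0
    have hc0 : c ≠ 0 := by
      rintro rfl
      rw [map_zero] at hc
      exact (ψ t).ne_zero hc
    have : a * ((ψ (i + t) : Eˣ) : E) = c • (a * ψ i) := by
      rw [hψadd, Units.val_mul, hc, Algebra.smul_def]
      ring
    rw [this, map_smul, smul_eq_mul]
    exact mul_ne_zero hc0 hi
  -- w₁ and w₂ are attained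
  have hmem : ∀ v ∈ ({w₁, w₂} : Set ℕ), ∃ a : E, a ≠ 0 ∧ w a = v := by
    intro v hv
    rw [← hW] at hv
    exact hv.1
  obtain ⟨a₁, ha₁, hwa₁⟩ := hmem w₁ (by left; rfl)
  obtain ⟨a₂, ha₂, hwa₂⟩ := hmem w₂ (by right; rfl)
  by_cases hD : Nat.card T = 1
  · -- ψ is bijective; weights constant; contradiction
    exfalso
    have hTbot : ∀ t ∈ T, t = (0 : ZMod n) := by
      intro t ht
      have hbot : T = ⊥ := AddSubgroup.eq_bot_of_card_le T (le_of_eq hD)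
      rw [hbot] at ht
      exact AddSubgroup.mem_bot.mp ht
    have hinj : Function.Injective ψ := by
      intro i j hij
      have h1 : ψ (i - j) * ψ j = ψ i := by rw [← hψadd, sub_add_cancel]
      rw [hij] at h1
      have h2 : ψ (i - j) = 1 := by
        have h3 : ψ (i - j) * ψ j = 1 * ψ j := by rw [h1, one_mul]
        exact mul_right_cancel h3
      have : i - j ∈ T := ⟨1, by rw [h2, Units.val_one, map_one]⟩
      have := hTbot _ this
      exact sub_eq_zero.mp this
    have hbij : Function.Bijective ψ := by
      rw [Fintype.bijective_iff_injective_and_card]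
      exact ⟨hinj, by rw [ZMod.card, hncard]⟩
    -- constancy of weights
    have hconst : ∀ (a b : Eˣ), (S (a : E)).ncard = (S (b : E)).ncard := by
      intro a b
      obtain ⟨t₀, ht₀⟩ := hbij.2 (a⁻¹ * b)
      have key : ∀ i : ZMod n, (i ∈ S (b : E)) ↔ (i + t₀ ∈ S (a : E)) := by
        intro i
        have heq : (a : E) * ((ψ (i + t₀) : Eˣ) : E) = (b : E) * ((ψ i : Eˣ) : E) := by
          rw [hψadd, ht₀, Units.val_mul, Units.val_mul, Units.val_inv_eq_inv_val]
          field_simp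
        show (Algebra.trace F E ((b:E) * ψ i) ≠ 0) ↔ (Algebra.trace F E ((a:E) * ψ (i + t₀)) ≠ 0)
        rw [heq]
      have himg : S (a : E) = (fun i => i + t₀) '' S (b : E) := by
        ext j
        constructor
        · intro hj
          exact ⟨j - t₀, (key (j - t₀)).mpr (by rwa [sub_add_cancel]), sub_add_cancel j t₀⟩
        · rintro ⟨i, hi, rfl⟩
          exact (key i).mp hi
      rw [himg, Set.ncard_image_of_injective _ (add_left_injective t₀)]
    have : w₁ = w₂ := by
      rw [← hwa₁, ← hwa₂, hwS, hwS]
      exact hconst (Units.mk0 a₁ ha₁) (Units.mk0 a₂ ha₂)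
    exact hne this
  · have hd₁ : Nat.card T ∣ w₁ := hwa₁ ▸ hdvd a₁
    have hd₂ : Nat.card T ∣ w₂ := hwa₂ ▸ hdvd a₂
    constructor
    · intro h
      rw [h] at hd₁
      have h1 : Nat.card T ∣ 1 := by simpa using Nat.dvd_sub hd₁ hd₂
      exact hD (Nat.dvd_one.mp h1)
    · intro h
      rw [h] at hd₂
      have h1 : Nat.card T ∣ 1 := by simpa using Nat.dvd_sub hd₂ hd₁
      exact hD (Nat.dvd_one.mp h1)
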